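/- Let P be the poset on [p+q] that is the disjoint union of two chains 1 < 2 < ⋯ < p and p+1 < p+2 < ⋯ < p+q (naturally labeled). Then the P-Eulerian polynomial W(P)(x) = ∑_{π ∈ L(P)} x^{des(π)}, where L(P) is the set of linear extensions of P and des(π) is the number of descents of π, equals ∑_{i=0}^{min(p,q)} C(p,i) C(q,i) x^i. -/
import Mathlib


open Polynomial Finset

/-- The number of descents of `π`, i.e. of indices `k` with `π(k) > π(k+1)`. -/
def desNum (p q : ℕ) (π : Equiv.Perm (Fin (p + q))) : ℕ :=
  (Finset.univ.filter (fun k : Fin (p + q) =>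
    ∃ l : Fin (p + q), (l : ℕ) = (k : ℕ) + 1 ∧ π l < π k)).card
/-- number of "10" factors in the word `w`. -/
def wDes {n : ℕ} (w : Fin n → Bool) : ℕ :=
  (Finset.univ.filter (fun k : Fin n =>
    ∃ l : Fin n, (l : ℕ) = (k : ℕ) + 1 ∧ w k = true ∧ w l = false)).card

/-- number of ones in the word `w`. -/
def wOnes {n : ℕ} (w : Fin n → Bool) : ℕ :=
  (Finset.univ.filter (fun k : Fin n => w k = true)).card

noncomputable def Sfun (n q : ℕ) : Polynomial ℤ :=
  ∑ w ∈ Finset.univ.filter (fun w : Fin n → Bool => wOnes w = q), X ^ wDes w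

noncomputable def Sfalse (n q : ℕ) : Polynomial ℤ :=
  ∑ w ∈ Finset.univ.filter (fun w : Fin n → Bool => wOnes w = q ∧
      ∃ k : Fin n, (k : ℕ) = 0 ∧ w k = false), X ^ wDes w

lemma wOnes_cons {n : ℕ} (b : Bool) (w : Fin n → Bool) :
    wOnes (Fin.cons b w) = (if b then 1 else 0) + wOnes w := by
  rw [wOnes, wOnes, Finset.card_filter, Finset.card_filter, Fin.sum_univ_succ]
  simp

lemma wDes_cons {n : ℕ} (b : Bool) (w : Fin n → Bool) :
    wDes (Fin.cons b w) = (if b = true ∧ (∃ k : Fin n, (k : ℕ) = 0 ∧ w k = false)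
      then 1 else 0) + wDes w := by
  rw [wDes, wDes, Finset.card_filter, Finset.card_filter, Fin.sum_univ_succ]
  congr 1
  · congr 1
    rw [eq_iff_iff]
    constructor
    · rintro ⟨l, hl, h1, h2⟩
      rcases Fin.eq_zero_or_eq_succ l with rfl | ⟨l', rfl⟩
      · simp at hl
      · simp only [Fin.val_succ, Fin.val_zero] at hl
        exact ⟨by simpa using h1, l', by omega, by simpa using h2⟩
    · rintro ⟨h1, k, hk, h2⟩
      exact ⟨k.succ, by simp [hk], by simpa using h1, by simpa using h2⟩
  · apply Finset.sum_congr rfl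
    intro j _
    congr 1
    rw [eq_iff_iff]
    constructor
    · rintro ⟨l, hl, h1, h2⟩
      rcases Fin.eq_zero_or_eq_succ l with rfl | ⟨l', rfl⟩
      · simp at hl
      · simp only [Fin.val_succ, Fin.cons_succ] at hl h1 h2 ⊢
        exact ⟨l', by omega, h1, h2⟩
    · rintro ⟨l, hl, h1, h2⟩
      exact ⟨l.succ, by simp [hl], by simpa using h1, by simpa using h2⟩

lemma Sfalse_succ (n q : ℕ) : Sfalse (n + 1) q = Sfun n q := by
  rw [Sfalse, Sfun]
  apply Finset.sum_nbij' (i := fun w => Fin.tail w) (j := fun w => Fin.cons false w)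
  · intro w hw
    simp only [Finset.mem_filter, Finset.mem_univ, true_and] at hw ⊢
    obtain ⟨h1, k, hk, hkf⟩ := hw
    have hk0 : k = 0 := by ext; simpa using hk
    subst hk0
    have : w = Fin.cons false (Fin.tail w) := by
      rw [← hkf]; exact (Fin.cons_self_tail w).symm
    rw [this, wOnes_cons] at h1
    simpa using h1
  · intro w hw
    simp only [Finset.mem_filter, Finset.mem_univ, true_and] at hw ⊢
    refine ⟨by rw [wOnes_cons]; simpa using hw, 0, by simp, by simp⟩
  · intro w hw
    simp only [Finset.mem_filter, Finset.mem_univ, true_and] at hw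
    obtain ⟨h1, k, hk, hkf⟩ := hw
    have hk0 : k = 0 := by ext; simpa using hk
    subst hk0
    rw [← hkf]; exact Fin.cons_self_tail w
  · intro w hw
    exact Fin.tail_cons _ _
  · intro w hw
    simp only [Finset.mem_filter, Finset.mem_univ, true_and] at hw
    obtain ⟨h1, k, hk, hkf⟩ := hw
    have hk0 : k = 0 := by ext; simpa using hk
    subst hk0
    have : w = Fin.cons false (Fin.tail w) := by
      rw [← hkf]; exact (Fin.cons_self_tail w).symm
    conv_lhs => rw [this]
    rw [wDes_cons]
    simp

lemma Sfun_succ (n q : ℕ) : Sfun (n + 1) (q + 1) =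
    Sfun n (q + 1) + Sfun n q + (X - 1) * Sfalse n q := by
  classical
  have hsplit : Sfun (n+1) (q+1) =
      ∑ p : Bool × (Fin n → Bool), (if wOnes (Fin.cons p.1 p.2) = q + 1
        then X ^ wDes (Fin.cons p.1 p.2) else 0) := by
    rw [Sfun, Finset.sum_filter]
    exact (Fintype.sum_equiv (Fin.consEquiv (fun _ => Bool)) _ _ (fun p => rfl)).symm
  rw [hsplit, Fintype.sum_prod_type, Fintype.sum_bool]
  have hfalse : ∑ w : Fin n → Bool, (if wOnes (Fin.cons false w) = q + 1
      then (X : Polynomial ℤ) ^ wDes (Fin.cons false w) else 0) = Sfun n (q+1) := by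
    rw [Sfun, Finset.sum_filter]
    apply Finset.sum_congr rfl
    intro w _
    rw [wOnes_cons, wDes_cons]
    simp
  have htrue : ∑ w : Fin n → Bool, (if wOnes (Fin.cons true w) = q + 1
      then (X : Polynomial ℤ) ^ wDes (Fin.cons true w) else 0)
      = Sfun n q + (X - 1) * Sfalse n q := by
    have step1 : ∑ w : Fin n → Bool, (if wOnes (Fin.cons true w) = q + 1
        then (X : Polynomial ℤ) ^ wDes (Fin.cons true w) else 0)
        = ∑ w ∈ Finset.univ.filter (fun w : Fin n → Bool => wOnes w = q),
            (X : Polynomial ℤ) ^ ((if (∃ k : Fin n, (k : ℕ) = 0 ∧ w k = false)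
              then 1 else 0) + wDes w) := by
      rw [Finset.sum_filter]
      apply Finset.sum_congr rfl
      intro w _
      rw [wOnes_cons, wDes_cons]
      have hc : (1 + wOnes w = q + 1) = (wOnes w = q) := by rw [eq_iff_iff]; omega
      have hc' : (wOnes w + 1 = q + 1) = (wOnes w = q) := by rw [eq_iff_iff]; omega
      simp [hc, hc']
    rw [step1]
    set P : (Fin n → Bool) → Prop := fun w => ∃ k : Fin n, (k : ℕ) = 0 ∧ w k = false with hP
    rw [← Finset.sum_filter_add_sum_filter_not
      (Finset.univ.filter (fun w : Fin n → Bool => wOnes w = q)) P]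
    have e1 : ∑ w ∈ (Finset.univ.filter (fun w : Fin n → Bool => wOnes w = q)).filter P,
        (X : Polynomial ℤ) ^ ((if P w then 1 else 0) + wDes w)
        = X * Sfalse n q := by
      rw [Sfalse, Finset.mul_sum, Finset.filter_filter]
      apply Finset.sum_congr rfl
      intro w hw
      simp only [Finset.mem_filter] at hw
      rw [if_pos hw.2.2, pow_add, pow_one]
    have e2 : ∑ w ∈ (Finset.univ.filter (fun w : Fin n → Bool => wOnes w = q)).filter
        (fun w => ¬ P w), (X : Polynomial ℤ) ^ ((if P w then 1 else 0) + wDes w)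
        = Sfun n q - Sfalse n q := by
      have : Sfun n q = Sfalse n q +
          ∑ w ∈ (Finset.univ.filter (fun w : Fin n → Bool => wOnes w = q)).filter
            (fun w => ¬ P w), (X : Polynomial ℤ) ^ wDes w := by
        rw [Sfun, ← Finset.sum_filter_add_sum_filter_not
          (Finset.univ.filter (fun w : Fin n → Bool => wOnes w = q)) P, Sfalse,
          Finset.filter_filter]
      rw [this]
      have : ∀ w ∈ (Finset.univ.filter (fun w : Fin n → Bool => wOnes w = q)).filter
          (fun w => ¬ P w), (X : Polynomial ℤ) ^ ((if P w then 1 else 0) + wDes w)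
          = (X : Polynomial ℤ) ^ wDes w := by
        intro w hw
        simp only [Finset.mem_filter] at hw
        rw [if_neg hw.2, zero_add]
      rw [Finset.sum_congr rfl this]
      ring
    rw [e1, e2]
    ring
  rw [hfalse, htrue]
  ring

lemma wDes_const {n : ℕ} (b : Bool) : wDes (fun _ : Fin n => b) = 0 := by
  rw [wDes, Finset.card_eq_zero]
  ext k
  simp only [Finset.mem_filter, Finset.mem_univ, true_and, Finset.notMem_empty, iff_false]
  rintro ⟨l, _, h1, h2⟩
  cases b <;> simp_all

lemma Sfun_self (n : ℕ) : Sfun n n = 1 := by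
  have hf : Finset.univ.filter (fun w : Fin n → Bool => wOnes w = n)
      = {fun _ => true} := by
    ext w
    simp only [Finset.mem_filter, Finset.mem_univ, true_and, Finset.mem_singleton]
    constructor
    · intro h
      funext k
      have huniv : Finset.univ.filter (fun k : Fin n => w k = true) = Finset.univ := by
        apply Finset.eq_of_subset_of_card_le (Finset.filter_subset _ _)
        rw [wOnes] at h
        rw [Finset.card_univ, Fintype.card_fin]
        omega
      have hk := Finset.eq_univ_iff_forall.1 huniv k
      exact (Finset.mem_filter.1 hk).2
    · rintro rfl
      rw [wOnes]
      simp
  rw [Sfun, hf, Finset.sum_singleton, wDes_const, pow_zero]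

lemma Sfun_zero (n : ℕ) : Sfun n 0 = 1 := by
  have hf : Finset.univ.filter (fun w : Fin n → Bool => wOnes w = 0)
      = {fun _ => false} := by
    ext w
    simp only [Finset.mem_filter, Finset.mem_univ, true_and, Finset.mem_singleton]
    constructor
    · intro h
      funext k
      rw [wOnes, Finset.card_eq_zero] at h
      have := Finset.eq_empty_iff_forall_notMem.1 h k
      simp only [Finset.mem_filter, Finset.mem_univ, true_and] at this
      simpa using this
    · rintro rfl
      rw [wOnes, Finset.card_eq_zero]
      ext k; simp
  rw [Sfun, hf, Finset.sum_singleton, wDes_const, pow_zero]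

noncomputable def RS (p q : ℕ) : Polynomial ℤ :=
  ∑ i ∈ Finset.range (p + q + 1), C ((p.choose i : ℤ) * q.choose i) * X ^ i

lemma RS_coeff (p q j : ℕ) : (RS p q).coeff j = (p.choose j : ℤ) * q.choose j := by
  rw [RS, Polynomial.finset_sum_coeff]
  simp only [Polynomial.coeff_C_mul, Polynomial.coeff_X_pow, mul_ite, mul_one, mul_zero]
  rw [Finset.sum_ite_eq]
  by_cases hj : j ∈ Finset.range (p + q + 1)
  · rw [if_pos hj]
  · rw [if_neg hj]
    rw [Finset.mem_range, not_lt] at hj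
    have : p.choose j = 0 := Nat.choose_eq_zero_of_lt (by omega)
    rw [this]
    push_cast
    ring
lemma RS_rec (p q : ℕ) : RS (p+1) (q+1) = RS p (q+1) + RS (p+1) q + (X - 1) * RS p q := by
  ext j
  rw [Polynomial.coeff_add, Polynomial.coeff_add, sub_mul, one_mul, Polynomial.coeff_sub]
  rw [RS_coeff, RS_coeff, RS_coeff, RS_coeff]
  cases j with
  | zero =>
    rw [Polynomial.mul_coeff_zero, Polynomial.coeff_X_zero, zero_mul]
    simp
  | succ j =>
    rw [Polynomial.coeff_X_mul, RS_coeff]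
    push_cast [Nat.choose_succ_succ]
    ring

lemma Sfun_eq (p : ℕ) : ∀ q, Sfun (p + q) q = RS p q := by
  induction p with
  | zero =>
    intro q
    rw [Nat.zero_add, Sfun_self]
    ext j
    rw [RS_coeff]
    cases j with
    | zero => simp
    | succ j => simp [Nat.choose, Polynomial.coeff_one]
  | succ p ih =>
    intro q
    induction q with
    | zero =>
      rw [Nat.add_zero, Sfun_zero]
      ext j
      rw [RS_coeff]
      cases j with
      | zero => simp
      | succ j => simp [Nat.choose, Polynomial.coeff_one]
    | succ q ihq =>
      rw [show (p+1)+(q+1) = ((p+1)+q)+1 from rfl, Sfun_succ, RS_rec]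
      rw [show Sfun ((p+1)+q) (q+1) = RS p (q+1) by
        rw [show (p+1)+q = p+(q+1) by omega]; exact ih (q+1)]
      rw [ihq]
      rw [show Sfalse ((p+1)+q) q = RS p q by
        rw [show (p+1)+q = (p+q)+1 by omega, Sfalse_succ]; exact ih q]

lemma RS_eq_min (p q : ℕ) : RS p q
    = ∑ i ∈ Finset.range (min p q + 1), C ((p.choose i : ℤ) * q.choose i) * X ^ i := by
  rw [RS]
  symm
  apply Finset.sum_subset
  · apply Finset.range_subset_range.2
    omega
  · intro i _ hi
    rw [Finset.mem_range, not_lt] at hi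
    have : (p.choose i : ℤ) * q.choose i = 0 := by
      rcases Nat.lt_or_ge (min p q) p with h | h
      · -- min p q = q
        have : q.choose i = 0 := Nat.choose_eq_zero_of_lt (by omega)
        rw [this]; push_cast; ring
      · have : p.choose i = 0 := Nat.choose_eq_zero_of_lt (by omega)
        rw [this]; push_cast; ring
    rw [this, map_zero, zero_mul]

section TPerm
variable {n : ℕ}

lemma compl_card_add (T : Finset (Fin n)) : Tᶜ.card + T.card = n := by
  have := Finset.card_add_card_compl T
  rw [Fintype.card_fin] at this
  omega

noncomputable def tFun (T : Finset (Fin n)) (a : Fin n) : Fin n :=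
  if h : (a : ℕ) < Tᶜ.card then Tᶜ.orderEmbOfFin rfl ⟨a, h⟩
  else T.orderEmbOfFin rfl ⟨(a : ℕ) - Tᶜ.card, by
    have h1 := compl_card_add T
    have h2 := a.isLt
    omega⟩

lemma tFun_mem_left (T : Finset (Fin n)) {a : Fin n} (h : (a : ℕ) < Tᶜ.card) :
    tFun T a ∈ Tᶜ := by
  rw [tFun, dif_pos h]; exact Finset.orderEmbOfFin_mem _ _ _

lemma tFun_mem_right (T : Finset (Fin n)) {a : Fin n} (h : ¬ (a : ℕ) < Tᶜ.card) :
    tFun T a ∈ T := by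
  rw [tFun, dif_neg h]; exact Finset.orderEmbOfFin_mem _ _ _

lemma tFun_lt_left (T : Finset (Fin n)) {a b : Fin n} (hab : a < b)
    (hb : (b : ℕ) < Tᶜ.card) : tFun T a < tFun T b := by
  have ha : (a : ℕ) < Tᶜ.card := lt_trans hab hb
  rw [tFun, dif_pos ha, tFun, dif_pos hb]
  exact (Tᶜ.orderEmbOfFin rfl).strictMono (by exact hab)

lemma tFun_lt_right (T : Finset (Fin n)) {a b : Fin n} (hab : a < b)
    (ha : ¬ (a : ℕ) < Tᶜ.card) : tFun T a < tFun T b := by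
  have hb : ¬ (b : ℕ) < Tᶜ.card := fun hb => ha (lt_trans hab hb)
  rw [tFun, dif_neg ha, tFun, dif_neg hb]
  apply (T.orderEmbOfFin rfl).strictMono
  rw [Fin.mk_lt_mk]
  have : (a : ℕ) < (b : ℕ) := hab
  omega

lemma tFun_inj (T : Finset (Fin n)) : Function.Injective (tFun T) := by
  intro a b hab
  rcases lt_trichotomy a b with h | h | h
  · exfalso
    by_cases hb : (b : ℕ) < Tᶜ.card
    · exact absurd hab (ne_of_lt (tFun_lt_left T h hb))
    · by_cases ha : (a : ℕ) < Tᶜ.card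
      · have h1 := tFun_mem_left T ha
        have h2 := tFun_mem_right T hb
        rw [hab] at h1
        exact (Finset.mem_compl.1 h1) h2
      · exact absurd hab (ne_of_lt (tFun_lt_right T h ha))
  · exact h
  · exfalso
    by_cases ha : (a : ℕ) < Tᶜ.card
    · exact absurd hab.symm (ne_of_lt (tFun_lt_left T h ha))
    · by_cases hb : (b : ℕ) < Tᶜ.card
      · have h1 := tFun_mem_left T hb
        have h2 := tFun_mem_right T ha
        rw [← hab] at h1
        exact (Finset.mem_compl.1 h1) h2
      · exact absurd hab.symm (ne_of_lt (tFun_lt_right T h hb))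

noncomputable def tPerm (T : Finset (Fin n)) : Equiv.Perm (Fin n) :=
  (Equiv.ofBijective (tFun T)
    ((Fintype.bijective_iff_injective_and_card _).2 ⟨tFun_inj T, rfl⟩)).symm

lemma tPerm_symm_apply (T : Finset (Fin n)) (a : Fin n) :
    (tPerm T).symm a = tFun T a := rfl

lemma tFun_tPerm (T : Finset (Fin n)) (k : Fin n) : tFun T (tPerm T k) = k := by
  rw [← tPerm_symm_apply]
  exact (tPerm T).symm_apply_apply k

lemma mem_iff_le (T : Finset (Fin n)) (k : Fin n) :
    k ∈ T ↔ Tᶜ.card ≤ ((tPerm T) k : ℕ) := by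
  constructor
  · intro hk
    by_contra h
    push_neg at h
    have := tFun_mem_left T h
    rw [tFun_tPerm] at this
    exact (Finset.mem_compl.1 this) hk
  · intro h
    have := tFun_mem_right T (not_lt.2 h)
    rwa [tFun_tPerm] at this

lemma tPerm_lt_of_mem (T : Finset (Fin n)) {k l : Fin n} (hk : k ∈ T) (hl : l ∈ T)
    (hkl : k < l) : tPerm T k < tPerm T l := by
  rcases lt_trichotomy (tPerm T k) (tPerm T l) with h | h | h
  · exact h
  · exfalso
    have : k = l := by
      have := congrArg (tFun T) h
      rwa [tFun_tPerm, tFun_tPerm] at this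
    exact absurd this (ne_of_lt hkl)
  · exfalso
    have hC : ¬ ((tPerm T l : Fin n) : ℕ) < Tᶜ.card := not_lt.2 ((mem_iff_le T l).1 hl)
    have := tFun_lt_right T h hC
    rw [tFun_tPerm, tFun_tPerm] at this
    exact absurd hkl (not_lt.2 (le_of_lt this))

lemma tPerm_lt_of_notMem (T : Finset (Fin n)) {k l : Fin n} (hk : k ∉ T) (hl : l ∉ T)
    (hkl : k < l) : tPerm T k < tPerm T l := by
  rcases lt_trichotomy (tPerm T k) (tPerm T l) with h | h | h
  · exact h
  · exfalso
    have : k = l := by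
      have := congrArg (tFun T) h
      rwa [tFun_tPerm, tFun_tPerm] at this
    exact absurd this (ne_of_lt hkl)
  · exfalso
    have hC : ((tPerm T k : Fin n) : ℕ) < Tᶜ.card := by
      by_contra hc
      exact hk ((mem_iff_le T k).2 (not_lt.1 hc))
    have := tFun_lt_left T h hC
    rw [tFun_tPerm, tFun_tPerm] at this
    exact absurd hkl (not_lt.2 (le_of_lt this))

lemma tPerm_lt_iff (T : Finset (Fin n)) {k l : Fin n} (hkl : (l : ℕ) = (k : ℕ) + 1) :
    tPerm T l < tPerm T k ↔ (k ∈ T ∧ l ∉ T) := by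
  have hkl' : k < l := by rw [Fin.lt_def]; omega
  constructor
  · intro h
    by_cases hk : k ∈ T <;> by_cases hl : l ∈ T
    · exact absurd (tPerm_lt_of_mem T hk hl hkl') (lt_asymm h)
    · exact ⟨hk, hl⟩
    · exfalso
      have h1 : ((tPerm T k : Fin n) : ℕ) < Tᶜ.card := by
        by_contra hc
        exact hk ((mem_iff_le T k).2 (not_lt.1 hc))
      have h2 := (mem_iff_le T l).1 hl
      rw [Fin.lt_def] at h
      omega
    · exact absurd (tPerm_lt_of_notMem T hk hl hkl') (lt_asymm h)
  · rintro ⟨hk, hl⟩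
    have h1 := (mem_iff_le T k).1 hk
    have h2 : ((tPerm T l : Fin n) : ℕ) < Tᶜ.card := by
      by_contra hc
      exact hl ((mem_iff_le T l).2 (not_lt.1 hc))
    rw [Fin.lt_def]
    omega

lemma desNum_tPerm (p q : ℕ) (T : Finset (Fin (p + q))) :
    desNum p q (tPerm T) = wDes (fun k => decide (k ∈ T)) := by
  rw [desNum, wDes]
  congr 1
  apply Finset.filter_congr
  intro k _
  constructor
  · rintro ⟨l, hl, hlt⟩
    obtain ⟨h1, h2⟩ := (tPerm_lt_iff T hl).1 hlt
    exact ⟨l, hl, by simp [h1], by simp [h2]⟩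
  · rintro ⟨l, hl, h1, h2⟩
    simp only [decide_eq_true_eq, decide_eq_false_iff_not] at h1 h2
    exact ⟨l, hl, (tPerm_lt_iff T hl).2 ⟨h1, h2⟩⟩

lemma tPerm_le_ext (T : Finset (Fin n)) {a b : Fin n} (hab : a < b)
    (hiff : ((a : ℕ) < Tᶜ.card ↔ (b : ℕ) < Tᶜ.card)) :
    (tPerm T).symm a < (tPerm T).symm b := by
  rw [tPerm_symm_apply, tPerm_symm_apply]
  by_cases hb : (b : ℕ) < Tᶜ.card
  · exact tFun_lt_left T hab hb
  · exact tFun_lt_right T hab (fun ha => hb (hiff.1 ha))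

end TPerm

lemma card_filter_ge_perm (p q : ℕ) (π : Equiv.Perm (Fin (p + q))) :
    (Finset.univ.filter fun k : Fin (p + q) => p ≤ ((π k : Fin (p+q)) : ℕ)).card = q := by
  have h1 : (Finset.univ.filter fun k : Fin (p + q) => p ≤ ((π k : Fin (p+q)) : ℕ)).card
      = (Finset.univ.filter fun a : Fin (p + q) => p ≤ (a : ℕ)).card := by
    apply Finset.card_bij (fun k _ => π k)
    · intro k hk
      simp only [Finset.mem_filter, Finset.mem_univ, true_and] at hk ⊢
      exact hk
    · intro a _ b _ hab
      exact π.injective hab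
    · intro a ha
      simp only [Finset.mem_filter, Finset.mem_univ, true_and] at ha
      exact ⟨π.symm a, by simp [ha], π.apply_symm_apply a⟩
  rw [h1, Finset.card_filter,
    Fin.sum_univ_eq_sum_range (fun i => if p ≤ i then 1 else 0) (p + q), ← Finset.card_filter]
  have : (Finset.range (p+q)).filter (fun i => p ≤ i) = Finset.Ico p (p+q) := by
    ext i
    simp only [Finset.mem_filter, Finset.mem_range, Finset.mem_Ico]
    omega
  rw [this, Nat.card_Ico]
  omega

lemma perm_eq_tPerm (p q : ℕ) (π : Equiv.Perm (Fin (p + q)))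
    (hle : ∀ a b : Fin (p + q), a < b → (((a : ℕ) < p) ↔ ((b : ℕ) < p)) →
      π.symm a < π.symm b) :
    π = tPerm (Finset.univ.filter fun k => p ≤ ((π k : Fin (p+q)) : ℕ)) := by
  set T : Finset (Fin (p+q)) :=
    Finset.univ.filter fun k => p ≤ ((π k : Fin (p+q)) : ℕ) with hT
  have hTcard : T.card = q := card_filter_ge_perm p q π
  have hCcard : Tᶜ.card = p := by
    rw [Finset.card_compl, Fintype.card_fin, hTcard]
    omega
  have hsymm : ∀ a, π.symm a = tFun T a := by
    intro a
    by_cases ha : (a : ℕ) < p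
    · -- left part
      set f : Fin p → Fin (p + q) := fun i => π.symm ⟨i, by omega⟩ with hf
      have hmem : ∀ i, f i ∈ Tᶜ := by
        intro i
        rw [Finset.mem_compl, hT]
        simp only [Finset.mem_filter, Finset.mem_univ, true_and, not_le, hf]
        rw [π.apply_symm_apply]
        exact i.isLt
      have hmono : StrictMono f := by
        intro i j hij
        apply hle
        · rw [Fin.mk_lt_mk]; exact hij
        · simp [i.isLt, j.isLt]
      have huniq := Finset.orderEmbOfFin_unique hCcard hmem hmono
      have h1 : π.symm a = f ⟨a, ha⟩ := by
        congr 1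
      rw [h1, congrFun huniq ⟨a, ha⟩, tFun, dif_pos (by omega : (a:ℕ) < Tᶜ.card)]
      exact Finset.orderEmbOfFin_eq_orderEmbOfFin_iff.2 rfl
    · -- right part
      set f : Fin q → Fin (p + q) := fun j => π.symm ⟨p + j, by omega⟩ with hf
      have hmem : ∀ j, f j ∈ T := by
        intro j
        rw [hT]
        simp only [Finset.mem_filter, Finset.mem_univ, true_and, hf]
        rw [π.apply_symm_apply]
        simp
      have hmono : StrictMono f := by
        intro i j hij
        apply hle
        · rw [Fin.mk_lt_mk]; omega
        · simp
      have huniq := Finset.orderEmbOfFin_unique hTcard hmem hmono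
      have haq : (a : ℕ) - p < q := by have := a.isLt; omega
      have h1 : π.symm a = f ⟨(a : ℕ) - p, haq⟩ := by
        congr 1
        rw [Fin.ext_iff]
        simp only [hf]
        omega
      rw [h1, congrFun huniq ⟨(a:ℕ) - p, haq⟩, tFun,
        dif_neg (by omega : ¬ ((a:ℕ) < Tᶜ.card))]
      apply Finset.orderEmbOfFin_eq_orderEmbOfFin_iff.2
      simp [hCcard]
  have hsymm' : π.symm = (tPerm T).symm := Equiv.ext fun a => by
    rw [hsymm a, ← tPerm_symm_apply]
  have := congrArg Equiv.symm hsymm'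
  simpa using this

/-- The `P`-Eulerian polynomial of the naturally labeled poset on `[p+q]` that is the
disjoint union of two chains `1 < ⋯ < p` and `p+1 < ⋯ < p+q` equals
`∑_{i=0}^{min(p,q)} C(p,i) C(q,i) x^i`.  Linear extensions are permutations `π` such
that whenever `a <_P b` (i.e. `a < b` and `a, b` lie in the same chain) we have
`π⁻¹(a) < π⁻¹(b)`. -/
theorem stmt3 (p q : ℕ) (hp : 0 < p) (hq : 0 < q) :
    ∑ π ∈ Finset.univ.filter (fun π : Equiv.Perm (Fin (p + q)) =>
        ∀ a b : Fin (p + q), a < b → (((a : ℕ) < p) ↔ ((b : ℕ) < p)) → π.symm a < π.symm b),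
      (X : Polynomial ℤ) ^ desNum p q π
    = ∑ i ∈ Finset.range (min p q + 1), C ((p.choose i : ℤ) * q.choose i) * X ^ i := by
  classical
  have key : (∑ π ∈ Finset.univ.filter (fun π : Equiv.Perm (Fin (p + q)) =>
        ∀ a b : Fin (p + q), a < b → (((a : ℕ) < p) ↔ ((b : ℕ) < p)) → π.symm a < π.symm b),
      (X : Polynomial ℤ) ^ desNum p q π) = Sfun (p + q) q := by
    rw [Sfun]
    apply Finset.sum_nbij'
      (i := fun π : Equiv.Perm (Fin (p + q)) =>
        fun k : Fin (p + q) => decide (p ≤ ((π k : Fin (p + q)) : ℕ)))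
      (j := fun w : Fin (p + q) → Bool =>
        tPerm (Finset.univ.filter fun k => w k = true))
    · intro π hπ
      simp only [Finset.mem_filter, Finset.mem_univ, true_and] at hπ ⊢
      rw [wOnes]
      have heq : Finset.filter
          (fun k : Fin (p+q) => (decide (p ≤ ((π k : Fin (p+q)) : ℕ))) = true) Finset.univ
          = Finset.filter (fun k : Fin (p+q) => p ≤ ((π k : Fin (p+q)) : ℕ)) Finset.univ := by
        apply Finset.filter_congr
        intro k _
        simp
      rw [heq]
      exact card_filter_ge_perm p q π
    · intro w hw
      simp only [Finset.mem_filter, Finset.mem_univ, true_and] at hw ⊢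
      set T : Finset (Fin (p+q)) := Finset.univ.filter fun k => w k = true with hT
      have hTcard : T.card = q := hw
      have hC : Tᶜ.card = p := by
        rw [Finset.card_compl, Fintype.card_fin, hTcard]
        omega
      intro a b hab hiff
      exact tPerm_le_ext T hab (by rw [hC]; exact hiff)
    · intro π hπ
      simp only [Finset.mem_filter, Finset.mem_univ, true_and] at hπ
      have heq : Finset.filter
          (fun k : Fin (p+q) => (decide (p ≤ ((π k : Fin (p+q)) : ℕ))) = true) Finset.univ
          = Finset.filter (fun k : Fin (p+q) => p ≤ ((π k : Fin (p+q)) : ℕ)) Finset.univ := by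
        apply Finset.filter_congr
        intro k _
        simp
      show tPerm _ = π
      rw [heq]
      exact (perm_eq_tPerm p q π hπ).symm
    · intro w hw
      simp only [Finset.mem_filter, Finset.mem_univ, true_and] at hw
      funext k
      set T : Finset (Fin (p+q)) := Finset.univ.filter fun k => w k = true with hT
      have hC : Tᶜ.card = p := by
        have hTcard : T.card = q := hw
        rw [Finset.card_compl, Fintype.card_fin, hTcard]
        omega
      have h1 : k ∈ T ↔ p ≤ (((tPerm T) k : Fin (p+q)) : ℕ) := by
        rw [mem_iff_le, hC]
      have h2 : k ∈ T ↔ w k = true := by simp [hT]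
      rcases Bool.eq_false_or_eq_true (w k) with hwk | hwk
      · rw [hwk]
        apply decide_eq_true
        exact h1.1 (h2.2 hwk)
      · rw [hwk]
        apply decide_eq_false
        intro hple
        have := h2.1 (h1.2 hple)
        rw [this] at hwk
        exact Bool.noConfusion hwk
    · intro π hπ
      simp only [Finset.mem_filter, Finset.mem_univ, true_and] at hπ
      congr 1
      have hrw := perm_eq_tPerm p q π hπ
      conv_lhs => rw [hrw]
      rw [desNum_tPerm]
      congr 1
      funext k
      simp only [decide_eq_decide, Finset.mem_filter, Finset.mem_univ, true_and]
  rw [key, Sfun_eq p q, RS_eq_min]
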